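/- Let f = x ⊕ y ⊕ z ⊕ 0 be the tropical polynomial max(x, y, z, 0) on ℝ³, and let g be a tropical polynomial in three variables. If C = V(f) ∩ V(g) is a weakly smooth tropical complete intersection curve, then the origin (0,0,0) does not lie in the tropical hypersurface V(g). -/

import Mathlib

/-- A tropical polynomial in three variables: a finite set of monomial exponents
together with real coefficients.  It represents
`g(x,y,z) = max over (a,b,c) ∈ support of (coeff (a,b,c) + a·x + b·y + c·z)`. -/
structure TropPoly3 where
  support : Finset (ℕ × ℕ × ℕ)
  coeff : ℕ × ℕ × ℕ → ℝ

namespace TropPoly3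

/-- The value of the term with exponent `t` at the point `p`. -/
def val (g : TropPoly3) (t : ℕ × ℕ × ℕ) (p : ℝ × ℝ × ℝ) : ℝ :=
  g.coeff t + (t.1 : ℝ) * p.1 + (t.2.1 : ℝ) * p.2.1 + (t.2.2 : ℝ) * p.2.2

/-- The tropical hypersurface `V(g)`: the locus where the maximum among the terms of
`g` is attained at least twice. -/
def tropV (g : TropPoly3) : Set (ℝ × ℝ × ℝ) :=
  {p | ∃ t ∈ g.support, ∃ s ∈ g.support, t ≠ s ∧ g.val t p = g.val s p ∧
        ∀ u ∈ g.support, g.val u p ≤ g.val t p}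

/-- The point of the Cayley polytope in `ℝ⁴` associated to an exponent `t` on level `i`. -/
def emb (t : ℕ × ℕ × ℕ) (i : ℝ) : Fin 4 → ℝ :=
  ![(t.1 : ℝ), (t.2.1 : ℝ), (t.2.2 : ℝ), i]

/-- The lifted value of the term `t` of a polynomial placed on level `lvl`, paired
against the linear functional `p` (regular-subdivision height selection). -/
def wlift (h : TropPoly3) (t : ℕ × ℕ × ℕ) (lvl : ℝ) (p : Fin 4 → ℝ) : ℝ :=
  h.coeff t + p 0 * (t.1 : ℝ) + p 1 * (t.2.1 : ℝ) + p 2 * (t.2.2 : ℝ) + p 3 * lvl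

/-- `v` is the maximal lifted value among all terms of `f` (level 0) and `g` (level 1). -/
def IsMaxVal (f g : TropPoly3) (p : Fin 4 → ℝ) (v : ℝ) : Prop :=
  (∀ s ∈ f.support, wlift f s 0 p ≤ v) ∧ (∀ s ∈ g.support, wlift g s 1 p ≤ v)

/-- The set of Cayley points selected by the functional `p`: those lifted points of the
Cayley polytope attaining the maximal `p`-value. -/
def cayleyPts (f g : TropPoly3) (p : Fin 4 → ℝ) : Set (Fin 4 → ℝ) :=
  {x | (∃ t ∈ f.support, x = emb t 0 ∧ IsMaxVal f g p (wlift f t 0 p)) ∨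
       (∃ t ∈ g.support, x = emb t 1 ∧ IsMaxVal f g p (wlift g t 1 p))}

/-- A cell of the Cayley subdivision of `Cay(Newt f, Newt g)` associated to `f` and `g`. -/
def IsCayleyCell (f g : TropPoly3) (A : Set (Fin 4 → ℝ)) : Prop :=
  ∃ p : Fin 4 → ℝ, A = convexHull ℝ (cayleyPts f g p)

/-- A mixed cell: its intersections with both levels `0` and `1` have dimension `≥ 1`. -/
def IsMixed (A : Set (Fin 4 → ℝ)) : Prop :=
  (∃ x ∈ A, ∃ y ∈ A, x ≠ y ∧ x 3 = 0 ∧ y 3 = 0) ∧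
  (∃ x ∈ A, ∃ y ∈ A, x ≠ y ∧ x 3 = 1 ∧ y 3 = 1)

/-- `C = V(f) ∩ V(g)` is a weakly smooth tropical complete intersection curve: every
`4`-dimensional mixed cell of the Cayley subdivision has the minimal volume `1/24`. -/
def WeaklySmoothCI (f g : TropPoly3) : Prop :=
  ∀ A : Set (Fin 4 → ℝ), IsCayleyCell f g A → affineSpan ℝ A = ⊤ → IsMixed A →
    MeasureTheory.volume A = ENNReal.ofReal (1 / 24)

/-- The tropical plane polynomial `f = x ⊕ y ⊕ z ⊕ 0 = max (x, y, z, 0)`. -/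
def planePoly : TropPoly3 :=
  ⟨({(1, 0, 0), (0, 1, 0), (0, 0, 1), (0, 0, 0)} : Finset (ℕ × ℕ × ℕ)), fun _ => 0⟩

end TropPoly3

open MeasureTheory Set

def Splx (n : ℕ) (r : ℝ) : Set (Fin n → ℝ) := {x | (∀ i, 0 ≤ x i) ∧ ∑ i, x i ≤ r}

lemma splx_empty {n : ℕ} {r : ℝ} (hr : r < 0) : Splx n r = ∅ := by
  ext x
  simp only [Splx, mem_setOf_eq, mem_empty_iff_false, iff_false]
  rintro ⟨h0, hs⟩
  exact absurd (le_trans (Finset.sum_nonneg fun i _ => h0 i) hs) (not_le.2 hr)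

lemma measurableSet_splx {n : ℕ} {r : ℝ} : MeasurableSet (Splx n r) := by
  have : Splx n r = (⋂ i, {x : Fin n → ℝ | 0 ≤ x i}) ∩ {x | ∑ i, x i ≤ r} := by
    ext x; simp [Splx, mem_iInter, forall_and]
  rw [this]
  exact (MeasurableSet.iInter fun i =>
      measurableSet_le measurable_const (measurable_pi_apply i)).inter
    (measurableSet_le (Finset.measurable_sum _ fun i _ => measurable_pi_apply i) measurable_const)

lemma volume_splx : ∀ (n : ℕ) (r : ℝ), 0 ≤ r →
    volume (Splx n r) = ENNReal.ofReal (r ^ n / (n.factorial : ℝ)) := by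
  intro n
  induction n with
  | zero =>
    intro r hr
    have : Splx 0 r = univ := by
      ext x; simp [Splx, hr]
    rw [this]
    simp [MeasureTheory.volume_pi, Measure.pi_univ]
  | succ n ih =>
    intro r hr
    have hmp := MeasureTheory.measurePreserving_piFinSuccAbove
      (fun _ : Fin (n+1) => (volume : Measure ℝ)) 0
    set B : Set (ℝ × (Fin n → ℝ)) :=
      {q | (0 ≤ q.1 ∧ ∀ i, 0 ≤ q.2 i) ∧ q.1 + ∑ i, q.2 i ≤ r} with hB
    have hBm : MeasurableSet B := by
      have : B = ({q : ℝ × (Fin n → ℝ) | 0 ≤ q.1} ∩ ⋂ i, {q : ℝ × (Fin n → ℝ) | 0 ≤ q.2 i})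
          ∩ {q : ℝ × (Fin n → ℝ) | q.1 + ∑ i, q.2 i ≤ r} := by
        ext q; simp only [hB, mem_setOf_eq, mem_inter_iff, mem_iInter, and_assoc]
      rw [this]
      refine MeasurableSet.inter (MeasurableSet.inter ?_ ?_) ?_
      · exact measurableSet_le measurable_const measurable_fst
      · exact MeasurableSet.iInter fun i =>
          measurableSet_le measurable_const measurable_snd.eval
      · exact measurableSet_le (measurable_fst.add
          (Finset.measurable_sum _ fun i _ => measurable_snd.eval))
          measurable_const
    have he : ∀ x : Fin (n+1) → ℝ,
        (MeasurableEquiv.piFinSuccAbove (fun _ => ℝ) 0) x = (x 0, fun j => x j.succ) := by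
      intro x
      rfl
    have hpre : Splx (n+1) r = (MeasurableEquiv.piFinSuccAbove (fun _ => ℝ) 0) ⁻¹' B := by
      ext x
      rw [mem_preimage, he]
      simp only [Splx, mem_setOf_eq, hB, Fin.forall_fin_succ, Fin.sum_univ_succ]
    have h1 : volume (Splx (n+1) r) =
        ((volume : Measure ℝ).prod (volume : Measure (Fin n → ℝ))) B := by
      rw [hpre]
      exact hmp.measure_preimage hBm.nullMeasurableSet
    rw [h1, Measure.prod_apply hBm]
    have hsec : ∀ a : ℝ, (Prod.mk a ⁻¹' B) = if 0 ≤ a then Splx n (r - a) else ∅ := by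
      intro a
      split_ifs with ha
      · ext y
        simp [hB, Splx, ha, le_sub_iff_add_le']
      · ext y
        simp [hB, ha]
    have hfun : ∀ a : ℝ, volume (Prod.mk a ⁻¹' B) =
        Set.indicator (Icc 0 r) (fun a => ENNReal.ofReal ((r - a) ^ n / (n.factorial : ℝ))) a := by
      intro a
      rw [hsec a]
      by_cases ha : 0 ≤ a
      · by_cases har : a ≤ r
        · rw [if_pos ha, ih _ (by linarith), indicator_of_mem (mem_Icc.2 ⟨ha, har⟩)]
        · rw [if_pos ha, splx_empty (by linarith), measure_empty,
            indicator_of_notMem (by simp [mem_Icc]; intro _; linarith)]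
      · rw [if_neg ha, measure_empty,
          indicator_of_notMem (by simp [mem_Icc]; intro h; exact absurd h ha)]
    rw [lintegral_congr hfun, lintegral_indicator measurableSet_Icc]
    have hcont : Continuous fun a : ℝ => (r - a) ^ n / (n.factorial : ℝ) := by fun_prop
    rw [← ofReal_integral_eq_lintegral_ofReal (hcont.integrableOn_Icc)
      (by
        filter_upwards [ae_restrict_mem measurableSet_Icc] with a ha
        exact div_nonneg (pow_nonneg (by linarith [ha.2]) n) (by positivity))]
    rw [MeasureTheory.integral_Icc_eq_integral_Ioc, ← intervalIntegral.integral_of_le hr]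
    rw [intervalIntegral.integral_div]
    rw [intervalIntegral.integral_comp_sub_left (fun x => x ^ n) r]
    simp only [sub_self, sub_zero, integral_pow]
    congr 1
    rw [pow_succ]
    rw [Nat.factorial_succ]
    push_cast
    have h1 : ((n : ℝ) + 1) ≠ 0 := by positivity
    have h2 : ((n.factorial : ℝ)) ≠ 0 := by positivity
    field_simp
    simp

lemma convex_splx (n : ℕ) (r : ℝ) : Convex ℝ (Splx n r) := by
  intro x hx y hy a b ha hb hab
  refine ⟨fun i => ?_, ?_⟩
  · have := hx.1 i; have := hy.1 i
    simp only [Pi.add_apply, Pi.smul_apply, smul_eq_mul]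
    nlinarith
  · have : ∑ i, (a • x + b • y) i = a * ∑ i, x i + b * ∑ i, y i := by
      simp only [Pi.add_apply, Pi.smul_apply, smul_eq_mul, Finset.sum_add_distrib,
        Finset.mul_sum]
    rw [this]
    calc a * ∑ i, x i + b * ∑ i, y i ≤ a * r + b * r :=
          add_le_add (mul_le_mul_of_nonneg_left hx.2 ha) (mul_le_mul_of_nonneg_left hy.2 hb)
      _ = r := by rw [← add_mul, hab, one_mul]

lemma corner_eq (n : ℕ) :
    convexHull ℝ ({0} ∪ Set.range (fun (i : Fin n) (j : Fin n) => if i = j then (1:ℝ) else 0))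
      = Splx n 1 := by
  apply Subset.antisymm
  · apply convexHull_min _ (convex_splx n 1)
    rintro x (rfl | ⟨i, rfl⟩)
    · exact ⟨fun i => le_refl 0, by simp⟩
    · refine ⟨fun j => by positivity, ?_⟩
      simp
  · rintro x ⟨h0, hs⟩
    have hsn : 0 ≤ ∑ i, x i := Finset.sum_nonneg fun i _ => h0 i
    rcases eq_or_lt_of_le hsn with heq | hpos
    · have hx0 : x = 0 := by
        funext i
        exact (Finset.sum_eq_zero_iff_of_nonneg (fun i _ => h0 i)).1 heq.symm i (Finset.mem_univ i)
      rw [hx0]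
      exact subset_convexHull ℝ _ (Or.inl rfl)
    · set s := ∑ i, x i with hsdef
      have hz : s⁻¹ • x ∈ convexHull ℝ
          ({(0 : Fin n → ℝ)} ∪ Set.range (fun (i : Fin n) (j : Fin n) => if i = j then (1:ℝ) else 0)) := by
        apply convexHull_mono (subset_union_right)
        have hsum1 : ∑ i, (s⁻¹ • x) i = 1 := by
          simp only [Pi.smul_apply, smul_eq_mul, ← Finset.mul_sum]
          field_simp
          exact hsdef.symm
        rw [pi_eq_sum_univ (s⁻¹ • x), ← Finset.univ.centerMass_eq_of_sum_1 _ hsum1]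
        exact Finset.univ.centerMass_mem_convexHull
          (fun i _ => mul_nonneg (inv_nonneg.2 hsn) (h0 i))
          (hsum1 ▸ zero_lt_one) (fun i _ => Set.mem_range_self i)
      have h0' : (0 : Fin n → ℝ) ∈ convexHull ℝ
          ({(0 : Fin n → ℝ)} ∪ Set.range (fun (i : Fin n) (j : Fin n) => if i = j then (1:ℝ) else 0)) :=
        subset_convexHull ℝ _ (Or.inl rfl)
      have := (convex_convexHull ℝ _) hz h0' (le_of_lt hpos) (by linarith : (0:ℝ) ≤ 1 - s) (by ring)
      have hxeq : s • (s⁻¹ • x) + (1 - s) • (0 : Fin n → ℝ) = x := by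
        rw [smul_smul, smul_zero, add_zero, mul_inv_cancel₀ (ne_of_gt hpos), one_smul]
      rwa [hxeq] at this


set_option maxHeartbeats 1600000 in
open TropPoly3 MeasureTheory Set in
lemma key_contradiction (g : TropPoly3) (hws : WeaklySmoothCI planePoly g) (t s : ℕ × ℕ × ℕ)
    (ht : t ∈ g.support) (hs : s ∈ g.support)
    (hmax : ∀ u ∈ g.support, g.coeff u ≤ g.coeff t) (heq : g.coeff t = g.coeff s)
    (j : Fin 4) (hj2 : emb t 1 j + 1 ≤ emb s 1 j) : False := by
  classical
  set M : ℝ := g.coeff t with hM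
  set p : Fin 4 → ℝ := ![0, 0, 0, -M] with hp
  have hp0 : p 0 = 0 := rfl
  have hp1 : p 1 = 0 := rfl
  have hp2 : p 2 = 0 := rfl
  have hp3 : p 3 = -M := rfl
  have hwf : ∀ u : ℕ × ℕ × ℕ, wlift planePoly u 0 p = 0 := by
    intro u
    simp [wlift, planePoly, hp0, hp1, hp2, hp3]
  have hwg : ∀ u : ℕ × ℕ × ℕ, wlift g u 1 p = g.coeff u - M := by
    intro u
    simp [wlift, hp0, hp1, hp2, hp3]
    ring
  have hmaxval : IsMaxVal planePoly g p 0 :=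
    ⟨fun u _ => (hwf u).le, fun u hu => by rw [hwg]; linarith [hmax u hu]⟩
  have hPmem : ∀ u ∈ planePoly.support, emb u 0 ∈ cayleyPts planePoly g p := by
    intro u hu
    exact Or.inl ⟨u, hu, rfl, by rw [hwf]; exact hmaxval⟩
  have hQ1mem : emb t 1 ∈ cayleyPts planePoly g p := by
    refine Or.inr ⟨t, ht, rfl, ?_⟩
    rw [hwg, sub_self]
    exact hmaxval
  have hQ2mem : emb s 1 ∈ cayleyPts planePoly g p := by
    refine Or.inr ⟨s, hs, rfl, ?_⟩
    rw [hwg, ← heq, sub_self]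
    exact hmaxval
  set A : Set (Fin 4 → ℝ) := convexHull ℝ (cayleyPts planePoly g p) with hA
  have hcell : IsCayleyCell planePoly g A := ⟨p, rfl⟩
  -- the five distinguished points
  have h100 : (1,0,0) ∈ planePoly.support := by decide
  have h010 : (0,1,0) ∈ planePoly.support := by decide
  have h001 : (0,0,1) ∈ planePoly.support := by decide
  have h000 : (0,0,0) ∈ planePoly.support := by decide
  set pts : Set (Fin 4 → ℝ) :=
    {emb (1,0,0) 0, emb (0,1,0) 0, emb (0,0,1) 0, emb (0,0,0) 0, emb t 1} with hpts
  have hptssub : pts ⊆ cayleyPts planePoly g p := by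
    rintro x (rfl | rfl | rfl | rfl | rfl)
    · exact hPmem _ h100
    · exact hPmem _ h010
    · exact hPmem _ h001
    · exact hPmem _ h000
    · exact hQ1mem
  set S1 : Set (Fin 4 → ℝ) := convexHull ℝ pts with hS1
  have hS1A : S1 ⊆ A := convexHull_mono hptssub
  -- the linear map sending the corner simplex to S1
  set M4 : Matrix (Fin 4) (Fin 4) ℝ :=
    Matrix.of ![![1,0,0,(t.1:ℝ)],![0,1,0,(t.2.1:ℝ)],![0,0,1,(t.2.2:ℝ)],![0,0,0,1]] with hM4
  set L : (Fin 4 → ℝ) →ₗ[ℝ] (Fin 4 → ℝ) := Matrix.toLin' M4 with hL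
  have hLb : ∀ i : Fin 4, L (fun k => if i = k then (1:ℝ) else 0) = fun k => M4 k i := by
    intro i
    funext k
    simp only [hL, Matrix.toLin'_apply, Matrix.mulVec, dotProduct, mul_ite, mul_one,
      mul_zero]
    rw [Finset.sum_ite_eq (Finset.univ) i (fun j => M4 k j)]
    simp
  have h0 : L (fun k => if (0 : Fin 4) = k then (1:ℝ) else 0) = emb (1,0,0) 0 := by
    rw [hLb]; funext k; fin_cases k <;> simp [emb, hM4, Matrix.vecHead, Matrix.vecTail]
  have h1 : L (fun k => if (1 : Fin 4) = k then (1:ℝ) else 0) = emb (0,1,0) 0 := by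
    rw [hLb]; funext k; fin_cases k <;> simp [emb, hM4, Matrix.vecHead, Matrix.vecTail]
  have h2 : L (fun k => if (2 : Fin 4) = k then (1:ℝ) else 0) = emb (0,0,1) 0 := by
    rw [hLb]; funext k; fin_cases k <;> simp [emb, hM4, Matrix.vecHead, Matrix.vecTail]
  have h3 : L (fun k => if (3 : Fin 4) = k then (1:ℝ) else 0) = emb t 1 := by
    rw [hLb]; funext k; fin_cases k <;> simp [emb, hM4, Matrix.vecHead, Matrix.vecTail]
  have h00 : (0 : Fin 4 → ℝ) = emb (0,0,0) 0 := by
    funext k; fin_cases k <;> simp [emb]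
  have hrange4 : ∀ {α : Type} (f : Fin 4 → α), Set.range f = {f 0, f 1, f 2, f 3} := by
    intro α f
    ext x
    constructor
    · rintro ⟨i, rfl⟩
      fin_cases i
      exacts [Or.inl rfl, Or.inr (Or.inl rfl), Or.inr (Or.inr (Or.inl rfl)),
        Or.inr (Or.inr (Or.inr rfl))]
    · rintro (rfl | rfl | rfl | rfl) <;> exact ⟨_, rfl⟩
  have himg : L '' ({0} ∪ Set.range (fun (i k : Fin 4) => if i = k then (1:ℝ) else 0)) = pts := by
    rw [hrange4, Set.singleton_union, Set.image_insert_eq, Set.image_insert_eq,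
      Set.image_insert_eq, Set.image_insert_eq, Set.image_singleton]
    simp only [map_zero, h0, h1, h2, h3]
    rw [hpts, ← h00]
    ext x
    simp only [Set.mem_insert_iff, Set.mem_singleton_iff]
    tauto
  have hdet : M4.det = 1 := by
    simp [hM4, Matrix.det_succ_row_zero, Fin.sum_univ_succ]
  have hvolS1 : volume S1 = ENNReal.ofReal (1 / 24) := by
    have : S1 = L '' (convexHull ℝ
        ({0} ∪ Set.range (fun (i k : Fin 4) => if i = k then (1:ℝ) else 0))) := by
      rw [LinearMap.image_convexHull, himg]
    rw [this, Measure.addHaar_image_linearMap, LinearMap.det_toLin', hdet, corner_eq,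
      volume_splx 4 1 (by norm_num)]
    rw [← ENNReal.ofReal_mul (by norm_num)]
    norm_num [Nat.factorial]
  -- affine span of A is everything
  have hPA : ∀ u ∈ planePoly.support, emb u 0 ∈ A := fun u hu =>
    subset_convexHull ℝ _ (hPmem u hu)
  have hQ1A : emb t 1 ∈ A := subset_convexHull ℝ _ hQ1mem
  have hQ2A : emb s 1 ∈ A := subset_convexHull ℝ _ hQ2mem
  have hspan : affineSpan ℝ A = ⊤ := by
    rw [eq_top_iff]
    intro x _
    have h0A : (0 : Fin 4 → ℝ) ∈ affineSpan ℝ A := by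
      rw [h00]; exact subset_affineSpan ℝ A (hPA _ h000)
    have hdir : ∀ y ∈ A, y ∈ (affineSpan ℝ A).direction := by
      intro y hy
      have := AffineSubspace.vsub_mem_direction (subset_affineSpan ℝ A hy) h0A
      simpa using this
    have hb0 : emb (1,0,0) 0 ∈ (affineSpan ℝ A).direction := hdir _ (hPA _ h100)
    have hb1 : emb (0,1,0) 0 ∈ (affineSpan ℝ A).direction := hdir _ (hPA _ h010)
    have hb2 : emb (0,0,1) 0 ∈ (affineSpan ℝ A).direction := hdir _ (hPA _ h001)
    have hq : emb t 1 ∈ (affineSpan ℝ A).direction := hdir _ hQ1A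
    have hδ : (fun k => if (3 : Fin 4) = k then (1:ℝ) else 0) ∈ (affineSpan ℝ A).direction := by
      have hrepr : (fun k => if (3 : Fin 4) = k then (1:ℝ) else 0) =
          emb t 1 - ((t.1 : ℝ) • emb (1,0,0) 0 + (t.2.1 : ℝ) • emb (0,1,0) 0 +
            (t.2.2 : ℝ) • emb (0,0,1) 0) := by
        funext k; fin_cases k <;> simp [emb]
      rw [hrepr]
      exact Submodule.sub_mem _ hq (Submodule.add_mem _ (Submodule.add_mem _
        (Submodule.smul_mem _ _ hb0) (Submodule.smul_mem _ _ hb1))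
        (Submodule.smul_mem _ _ hb2))
    have hs0 : (fun k => if (0 : Fin 4) = k then (1:ℝ) else 0) ∈ (affineSpan ℝ A).direction := by
      have : (fun k => if (0 : Fin 4) = k then (1:ℝ) else 0) = emb (1,0,0) 0 := by
        funext k; fin_cases k <;> simp [emb]
      rw [this]; exact hb0
    have hs1 : (fun k => if (1 : Fin 4) = k then (1:ℝ) else 0) ∈ (affineSpan ℝ A).direction := by
      have : (fun k => if (1 : Fin 4) = k then (1:ℝ) else 0) = emb (0,1,0) 0 := by
        funext k; fin_cases k <;> simp [emb]
      rw [this]; exact hb1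
    have hs2 : (fun k => if (2 : Fin 4) = k then (1:ℝ) else 0) ∈ (affineSpan ℝ A).direction := by
      have : (fun k => if (2 : Fin 4) = k then (1:ℝ) else 0) = emb (0,0,1) 0 := by
        funext k; fin_cases k <;> simp [emb]
      rw [this]; exact hb2
    have hxdir : x ∈ (affineSpan ℝ A).direction := by
      have hxrepr := pi_eq_sum_univ x
      rw [hxrepr]
      refine Submodule.sum_mem _ fun i _ => Submodule.smul_mem _ _ ?_
      fin_cases i
      exacts [hs0, hs1, hs2, hδ]
    have := AffineSubspace.vadd_mem_of_mem_direction hxdir h0A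
    simpa using this
  -- mixedness
  have hmix : IsMixed A := by
    constructor
    · refine ⟨emb (0,0,0) 0, hPA _ h000, emb (1,0,0) 0, hPA _ h100, ?_, rfl, rfl⟩
      intro hcon
      have := congrFun hcon 0
      norm_num [emb] at this
    · refine ⟨emb t 1, hQ1A, emb s 1, hQ2A, ?_, rfl, rfl⟩
      intro hcon
      have := congrFun hcon j
      linarith [this ▸ hj2]
  have hvolA : volume A = ENNReal.ofReal (1 / 24) := hws A hcell hspan hmix
  -- the separating functional
  set φ : (Fin 4 → ℝ) → ℝ := fun x => x j + x 3 with hφ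
  set c : ℝ := emb t 1 j + 1 with hc
  have htj0 : 0 ≤ emb t 1 j := by
    fin_cases j <;> simp [emb] <;> positivity
  have hφS1 : ∀ x ∈ S1, φ x ≤ c := by
    intro x hx
    have hconv : Convex ℝ {x : Fin 4 → ℝ | φ x ≤ c} := by
      apply convex_halfSpace_le (𝕜 := ℝ)
      exact ⟨fun a b => by simp [hφ]; ring, fun r a => by simp [hφ]; ring⟩
    have hsub : pts ⊆ {x : Fin 4 → ℝ | φ x ≤ c} := by
      rintro x (rfl | rfl | rfl | rfl | rfl) <;>
        · show φ _ ≤ c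
          have h3eq : ∀ u : ℕ × ℕ × ℕ, ∀ i : ℝ, emb u i 3 = i := fun u i => rfl
          fin_cases j <;> simp [hφ, hc, emb] <;> linarith [htj0]
    exact convexHull_min hsub hconv hx
  have hφQ2 : c + 1 ≤ φ (emb s 1) := by
    have h3 : emb s 1 3 = 1 := rfl
    simp only [hφ, hc, h3]
    linarith [hj2]
  -- an interior point of A
  have hconvA : Convex ℝ A := convex_convexHull ℝ _
  obtain ⟨x0, hx0⟩ : (interior A).Nonempty :=
    hconvA.interior_nonempty_iff_affineSpan_eq_top.2 hspan
  -- find a point of interior A strictly beyond the hyperplane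
  have hφcont : Continuous φ := ((continuous_apply j).add (continuous_apply 3))
  obtain ⟨y, hyint, hyφ⟩ : ∃ y, y ∈ interior A ∧ c < φ y := by
    by_cases hcx : c < φ x0
    · exact ⟨x0, hx0, hcx⟩
    · push_neg at hcx
      set d : ℝ := c - φ x0 with hd
      have hd0 : 0 ≤ d := by simp [hd]; linarith
      set μ : ℝ := (d + 1/2) / (d + 1) with hμ
      have hμ0 : 0 ≤ μ := by positivity
      have hμ1 : μ < 1 := by
        rw [hμ, div_lt_one (by linarith)]
        linarith
      refine ⟨(1 - μ) • x0 + μ • emb s 1,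
        hconvA.combo_interior_self_mem_interior hx0 hQ2A (by linarith) hμ0 (by ring), ?_⟩
      have hφy : φ ((1 - μ) • x0 + μ • emb s 1) = (1 - μ) * φ x0 + μ * φ (emb s 1) := by
        simp [hφ]; ring
      rw [hφy]
      have hμd : μ * (d + 1) = d + 1/2 := by
        rw [hμ, div_mul_cancel₀]
        linarith
      have h1 : μ * (c + 1) ≤ μ * φ (emb s 1) := mul_le_mul_of_nonneg_left hφQ2 hμ0
      have hx0d : φ x0 = c - d := by rw [hd]; ring
      rw [hx0d]
      have hexp : (1 - μ) * (c - d) + μ * (c + 1) = c - d + μ * (d + 1) := by ring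
      clear_value φ c d μ
      linarith [h1, hexp, hμd]
  set U : Set (Fin 4 → ℝ) := interior A ∩ {x | c < φ x} with hU
  have hUopen : IsOpen U := isOpen_interior.inter (isOpen_lt continuous_const hφcont)
  have hUA : U ⊆ A := fun x hx => interior_subset hx.1
  have hUS1 : Disjoint S1 U := by
    rw [Set.disjoint_left]
    intro x hxS hxU
    exact absurd hxU.2 (not_lt.2 (hφS1 x hxS))
  have hvolU : 0 < volume U := hUopen.measure_pos volume ⟨y, hyint, hyφ⟩
  have hsplit : volume (S1 ∪ U) = volume S1 + volume U :=
    measure_union hUS1 hUopen.measurableSet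
  have hle : volume (S1 ∪ U) ≤ volume A :=
    measure_mono (union_subset hS1A hUA)
  rw [hsplit, hvolS1, hvolA] at hle
  have : ENNReal.ofReal (1/24) < ENNReal.ofReal (1/24) + volume U :=
    ENNReal.lt_add_right (by simp) (ne_of_gt hvolU)
  exact absurd (lt_of_lt_of_le this hle) (lt_irrefl _)


open TropPoly3 in
/-- Lemma 4.2 of the paper: if `f = x ⊕ y ⊕ z ⊕ 0` and
`C = V(f) ∩ V(g)` is a weakly smooth tropical complete intersection curve, then the
origin does not lie on the tropical hypersurface `V(g)`. -/
theorem origin_not_in_tropV (g : TropPoly3) (hws : WeaklySmoothCI planePoly g) :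
    ((0 : ℝ), (0 : ℝ), (0 : ℝ)) ∉ tropV g := by
  intro h
  obtain ⟨t, ht, s, hs, tne, heqv, hmaxv⟩ := h
  have hval : ∀ u : ℕ × ℕ × ℕ, g.val u ((0:ℝ), (0:ℝ), (0:ℝ)) = g.coeff u := by
    intro u; simp [val]
  have heq : g.coeff t = g.coeff s := by
    rw [← hval t, ← hval s]; exact heqv
  have hmax : ∀ u ∈ g.support, g.coeff u ≤ g.coeff t := by
    intro u hu
    have := hmaxv u hu
    rwa [hval, hval] at this
  have hmax' : ∀ u ∈ g.support, g.coeff u ≤ g.coeff s := fun u hu => (hmax u hu).trans_eq heq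
  have hdiff : t.1 ≠ s.1 ∨ t.2.1 ≠ s.2.1 ∨ t.2.2 ≠ s.2.2 := by
    by_contra hcon
    push_neg at hcon
    exact tne (Prod.ext hcon.1 (Prod.ext hcon.2.1 hcon.2.2))
  have e0 : ∀ u : ℕ × ℕ × ℕ, emb u 1 0 = (u.1 : ℝ) := fun u => rfl
  have e1 : ∀ u : ℕ × ℕ × ℕ, emb u 1 1 = (u.2.1 : ℝ) := fun u => rfl
  have e2 : ∀ u : ℕ × ℕ × ℕ, emb u 1 2 = (u.2.2 : ℝ) := fun u => rfl
  rcases hdiff with hne | hne | hne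
  · rcases Ne.lt_or_gt hne with hlt | hlt
    · exact key_contradiction g hws t s ht hs hmax heq 0
        (by rw [e0, e0]; exact_mod_cast Nat.succ_le_of_lt hlt)
    · exact key_contradiction g hws s t hs ht hmax' heq.symm 0
        (by rw [e0, e0]; exact_mod_cast Nat.succ_le_of_lt hlt)
  · rcases Ne.lt_or_gt hne with hlt | hlt
    · exact key_contradiction g hws t s ht hs hmax heq 1
        (by rw [e1, e1]; exact_mod_cast Nat.succ_le_of_lt hlt)
    · exact key_contradiction g hws s t hs ht hmax' heq.symm 1
        (by rw [e1, e1]; exact_mod_cast Nat.succ_le_of_lt hlt)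
  · rcases Ne.lt_or_gt hne with hlt | hlt
    · exact key_contradiction g hws t s ht hs hmax heq 2
        (by rw [e2, e2]; exact_mod_cast Nat.succ_le_of_lt hlt)
    · exact key_contradiction g hws s t hs ht hmax' heq.symm 2
        (by rw [e2, e2]; exact_mod_cast Nat.succ_le_of_lt hlt)
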